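/- Let G be a connected graph with at least 5 vertices whose complement has a connected component isomorphic to the cycle C_4. Then no vertex of that component is a basis forced vertex of G. -/

import Mathlib

open SimpleGraph

def IsResolving {V : Type*} (G : SimpleGraph V) (R : Set V) : Prop :=
  ∀ x y : V, x ≠ y → ∃ r ∈ R, G.dist r x ≠ G.dist r y

noncomputable def metricDim {V : Type*} (G : SimpleGraph V) : ℕ :=
  sInf {n | ∃ R : Set V, IsResolving G R ∧ R.ncard = n}

def IsMetricBasis {V : Type*} (G : SimpleGraph V) (R : Set V) : Prop :=
  IsResolving G R ∧ R.ncard = metricDim G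

def IsBasisForced {V : Type*} (G : SimpleGraph V) (v : V) : Prop :=
  ∀ R : Set V, IsMetricBasis G R → v ∈ R

private lemma dist_two' {V : Type*} {G : SimpleGraph V} {x y w : V} (hxy : x ≠ y)
    (hnadj : ¬ G.Adj x y) (h1 : G.Adj x w) (h2 : G.Adj w y) : G.dist x y = 2 := by
  have hle : G.dist x y ≤ 2 := by
    have := G.dist_le (Walk.cons h1 (Walk.cons h2 Walk.nil))
    simpa using this
  have h0 : G.dist x y ≠ 0 := by
    rw [dist_ne_zero_iff_ne_and_reachable]
    exact ⟨hxy, (Walk.cons h1 (Walk.cons h2 Walk.nil)).reachable⟩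
  have h1' : G.dist x y ≠ 1 := fun h => hnadj (dist_eq_one_iff_adj.mp h)
  omega

private lemma key {V : Type*} [Fintype V] (G : SimpleGraph V) (hG : G.Connected)
    (a b c d : V)
    (hab : a ≠ b) (hac : a ≠ c) (had : a ≠ d) (hbc : b ≠ c) (hbd : b ≠ d) (hcd : c ≠ d)
    (Aac : G.Adj a c) (Abd : G.Adj b d)
    (Nab : ¬ G.Adj a b) (Nad : ¬ G.Adj a d) (Ncb : ¬ G.Adj c b) (Ncd : ¬ G.Adj c d)
    (hout : ∀ w, w ≠ a → w ≠ b → w ≠ c → w ≠ d →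
      G.Adj a w ∧ G.Adj b w ∧ G.Adj c w ∧ G.Adj d w)
    (hw : ∃ w, w ≠ a ∧ w ≠ b ∧ w ≠ c ∧ w ≠ d) :
    ¬ IsBasisForced G a := by
  classical
  obtain ⟨w, hwa, hwb, hwc, hwd⟩ := hw
  -- adjacency characterizations
  have AdjA : ∀ z, z ≠ a → z ≠ b → z ≠ d → G.Adj a z := by
    intro z h1 h2 h3
    rcases eq_or_ne z c with rfl | h4
    · exact Aac
    · exact (hout z h1 h2 h4 h3).1
  have AdjB : ∀ z, z ≠ b → z ≠ a → z ≠ c → G.Adj b z := by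
    intro z h1 h2 h3
    rcases eq_or_ne z d with rfl | h4
    · exact Abd
    · exact (hout z h2 h1 h3 h4).2.1
  have AdjC : ∀ z, z ≠ c → z ≠ b → z ≠ d → G.Adj c z := by
    intro z h1 h2 h3
    rcases eq_or_ne z a with rfl | h4
    · exact Aac.symm
    · exact (hout z h4 h2 h1 h3).2.2.1
  have AdjD : ∀ z, z ≠ d → z ≠ a → z ≠ c → G.Adj d z := by
    intro z h1 h2 h3
    rcases eq_or_ne z b with rfl | h4
    · exact Abd.symm
    · exact (hout z h2 h4 h3 h1).2.2.2
  -- distances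
  have dA1 : ∀ z, z ≠ a → z ≠ b → z ≠ d → G.dist a z = 1 :=
    fun z h1 h2 h3 => dist_eq_one_iff_adj.mpr (AdjA z h1 h2 h3)
  have dB1 : ∀ z, z ≠ b → z ≠ a → z ≠ c → G.dist b z = 1 :=
    fun z h1 h2 h3 => dist_eq_one_iff_adj.mpr (AdjB z h1 h2 h3)
  have dC1 : ∀ z, z ≠ c → z ≠ b → z ≠ d → G.dist c z = 1 :=
    fun z h1 h2 h3 => dist_eq_one_iff_adj.mpr (AdjC z h1 h2 h3)
  have dD1 : ∀ z, z ≠ d → z ≠ a → z ≠ c → G.dist d z = 1 :=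
    fun z h1 h2 h3 => dist_eq_one_iff_adj.mpr (AdjD z h1 h2 h3)
  have dAb : G.dist a b = 2 :=
    dist_two' hab Nab (AdjA w hwa hwb hwd) (AdjB w hwb hwa hwc).symm
  have dAd : G.dist a d = 2 :=
    dist_two' had Nad (AdjA w hwa hwb hwd) (AdjD w hwd hwa hwc).symm
  have dCb : G.dist c b = 2 :=
    dist_two' hbc.symm Ncb (AdjC w hwc hwb hwd) (AdjB w hwb hwa hwc).symm
  have dCd : G.dist c d = 2 :=
    dist_two' hcd Ncd (AdjC w hwc hwb hwd) (AdjD w hwd hwa hwc).symm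
  have dBa : G.dist b a = 2 := by rw [dist_comm]; exact dAb
  have dDa : G.dist d a = 2 := by rw [dist_comm]; exact dAd
  have distAC : ∀ z, z ≠ a → z ≠ c → G.dist a z = G.dist c z := by
    intro z h1 h2
    rcases eq_or_ne z b with rfl | h3
    · rw [dAb, dCb]
    rcases eq_or_ne z d with rfl | h4
    · rw [dAd, dCd]
    · rw [dA1 z h1 h3 h4, dC1 z h2 h3 h4]
  have distBD : ∀ r, r ≠ b → r ≠ d → G.dist r b = G.dist r d := by
    intro r h1 h2
    rcases eq_or_ne r a with rfl | h3
    · rw [dAb, dAd]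
    rcases eq_or_ne r c with rfl | h4
    · rw [dCb, dCd]
    · have e1 : G.dist r b = 1 := by rw [dist_comm]; exact dB1 r h1 h3 h4
      have e2 : G.dist r d = 1 := by rw [dist_comm]; exact dD1 r h2 h3 h4
      rw [e1, e2]
  have hbdR : ∀ R : Set V, IsResolving G R → b ∈ R ∨ d ∈ R := by
    intro R hR
    obtain ⟨r, hrR, hrne⟩ := hR b d hbd
    rcases eq_or_ne r b with rfl | hrb
    · exact Or.inl hrR
    rcases eq_or_ne r d with rfl | hrd
    · exact Or.inr hrR
    · exact absurd (distBD r hrb hrd) hrne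
  -- the swap automorphism
  have hQ : ∀ y, y ≠ a → y ≠ c → (G.Adj a y ↔ G.Adj c y) := by
    intro y h1 h2
    constructor
    · intro h
      exact AdjC y h2 (fun hb' => Nab (hb' ▸ h)) (fun hd' => Nad (hd' ▸ h))
    · intro h
      exact AdjA y h1 (fun hb' => Ncb (hb' ▸ h)) (fun hd' => Ncd (hd' ▸ h))
  have mono : ∀ x y, G.Adj x y → G.Adj (Equiv.swap a c x) (Equiv.swap a c y) := by
    intro x y hxy
    have hxyne : x ≠ y := G.ne_of_adj hxy
    rcases eq_or_ne x a with hx1 | hx1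
    · rcases eq_or_ne y c with hy2 | hy2
      · rw [hx1, hy2, Equiv.swap_apply_left, Equiv.swap_apply_right]
        exact Aac.symm
      · have hy1 : y ≠ a := fun h => hxyne (by rw [hx1, h])
        rw [hx1, Equiv.swap_apply_left, Equiv.swap_apply_of_ne_of_ne hy1 hy2]
        exact (hQ y hy1 hy2).mp (hx1 ▸ hxy)
    rcases eq_or_ne x c with hx2 | hx2
    · rcases eq_or_ne y a with hy1 | hy1
      · rw [hx2, hy1, Equiv.swap_apply_right, Equiv.swap_apply_left]
        exact Aac
      · have hy2 : y ≠ c := fun h => hxyne (by rw [hx2, h])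
        rw [hx2, Equiv.swap_apply_right, Equiv.swap_apply_of_ne_of_ne hy1 hy2]
        exact (hQ y hy1 hy2).mpr (hx2 ▸ hxy)
    · rcases eq_or_ne y a with hy1 | hy1
      · rw [hy1, Equiv.swap_apply_left, Equiv.swap_apply_of_ne_of_ne hx1 hx2]
        exact ((hQ x hx1 hx2).mp (hy1 ▸ hxy).symm).symm
      rcases eq_or_ne y c with hy2 | hy2
      · rw [hy2, Equiv.swap_apply_right, Equiv.swap_apply_of_ne_of_ne hx1 hx2]
        exact ((hQ x hx1 hx2).mpr (hy2 ▸ hxy).symm).symm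
      · rw [Equiv.swap_apply_of_ne_of_ne hx1 hx2, Equiv.swap_apply_of_ne_of_ne hy1 hy2]
        exact hxy
  have swap_adj : ∀ x y : V, G.Adj (Equiv.swap a c x) (Equiv.swap a c y) ↔ G.Adj x y := by
    intro x y
    constructor
    · intro h
      have h2 := mono _ _ h
      rwa [Equiv.swap_apply_self, Equiv.swap_apply_self] at h2
    · exact mono x y
  have dist_le_map : ∀ x y : V,
      G.dist (Equiv.swap a c x) (Equiv.swap a c y) ≤ G.dist x y := by
    intro x y
    obtain ⟨p, hp⟩ := hG.exists_walk_length_eq_dist x y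
    have h := G.dist_le (p.map ⟨fun z => Equiv.swap a c z,
      fun {u v} h => (swap_adj u v).mpr h⟩)
    rwa [Walk.length_map, hp] at h
  have dist_map : ∀ x y : V,
      G.dist (Equiv.swap a c x) (Equiv.swap a c y) = G.dist x y := by
    intro x y
    refine le_antisymm (dist_le_map x y) ?_
    have h := dist_le_map (Equiv.swap a c x) (Equiv.swap a c y)
    rwa [Equiv.swap_apply_self, Equiv.swap_apply_self] at h
  -- existence of a metric basis
  intro hforced
  have huniv : IsResolving G (Set.univ : Set V) := by
    intro x y hxy
    refine ⟨x, Set.mem_univ x, ?_⟩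
    rw [SimpleGraph.dist_self]
    exact (hG.pos_dist_of_ne hxy).ne
  have hSne : {n | ∃ R : Set V, IsResolving G R ∧ R.ncard = n}.Nonempty :=
    ⟨_, Set.univ, huniv, rfl⟩
  obtain ⟨R, hRres, hRcard0⟩ := Nat.sInf_mem hSne
  have hRcard : R.ncard = metricDim G := hRcard0
  have hbasisR : IsMetricBasis G R := ⟨hRres, hRcard⟩
  have haR : a ∈ R := hforced R hbasisR
  by_cases hcR : c ∈ R
  · -- both a and c in a basis: contradiction with minimality
    have hbd' : b ∈ R ∨ d ∈ R := hbdR R hRres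
    have hcR' : c ∈ R \ {a} := Set.mem_diff_singleton.mpr ⟨hcR, Ne.symm hac⟩
    have solve : ∀ y, y ≠ a → ∃ r ∈ R \ {a}, G.dist r a ≠ G.dist r y := by
      intro y hy
      rcases eq_or_ne y c with h | hyc
      · refine ⟨c, hcR', ?_⟩
        rw [h, dC1 a hac hab had, SimpleGraph.dist_self]
        omega
      rcases eq_or_ne y b with h | hyb
      · refine ⟨c, hcR', ?_⟩
        rw [h, dC1 a hac hab had, dCb]
        omega
      rcases eq_or_ne y d with h | hyd
      · refine ⟨c, hcR', ?_⟩
        rw [h, dC1 a hac hab had, dCd]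
        omega
      · rcases hbd' with hb | hd
        · refine ⟨b, Set.mem_diff_singleton.mpr ⟨hb, Ne.symm hab⟩, ?_⟩
          rw [dBa, dB1 y hyb hy hyc]
          omega
        · refine ⟨d, Set.mem_diff_singleton.mpr ⟨hd, Ne.symm had⟩, ?_⟩
          rw [dDa, dD1 y hyd hy hyc]
          omega
    have hres' : IsResolving G (R \ {a}) := by
      intro x y hxy
      obtain ⟨r, hrR, hrne⟩ := hRres x y hxy
      rcases eq_or_ne r a with h | hra
      · rw [h] at hrne
        rcases eq_or_ne x a with hxe | hxa
        · obtain ⟨r', hrm, hrne'⟩ := solve y (fun hy => hxy (by rw [hxe, hy]))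
          exact ⟨r', hrm, by rw [hxe]; exact hrne'⟩
        rcases eq_or_ne y a with hye | hya2
        · obtain ⟨r', hrm, hrne'⟩ := solve x hxa
          exact ⟨r', hrm, by rw [hye]; exact hrne'.symm⟩
        rcases eq_or_ne x c with hxe | hxc
        · have hy2 : y = b ∨ y = d := by
            by_contra hcon
            push_neg at hcon
            exact hrne (by rw [hxe, dA1 c hac.symm hbc.symm hcd,
              dA1 y hya2 hcon.1 hcon.2])
          refine ⟨c, hcR', ?_⟩
          rcases hy2 with h2 | h2
          · rw [hxe, h2, SimpleGraph.dist_self, dCb]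
            omega
          · rw [hxe, h2, SimpleGraph.dist_self, dCd]
            omega
        rcases eq_or_ne y c with hye | hyc
        · have hx2 : x = b ∨ x = d := by
            by_contra hcon
            push_neg at hcon
            exact hrne (by rw [hye, dA1 x hxa hcon.1 hcon.2,
              dA1 c hac.symm hbc.symm hcd])
          refine ⟨c, hcR', ?_⟩
          rcases hx2 with h2 | h2
          · rw [hye, h2, SimpleGraph.dist_self, dCb]
            omega
          · rw [hye, h2, SimpleGraph.dist_self, dCd]
            omega
        · refine ⟨c, hcR', ?_⟩
          rw [← distAC x hxa hxc, ← distAC y hya2 hyc]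
          exact hrne
      · exact ⟨r, Set.mem_diff_singleton.mpr ⟨hrR, hra⟩, hrne⟩
    have hle2 : metricDim G ≤ (R \ {a}).ncard := Nat.sInf_le ⟨R \ {a}, hres', rfl⟩
    have hc1 : (R \ {a}).ncard = R.ncard - 1 :=
      Set.ncard_diff_singleton_of_mem haR
    have hpos : 0 < R.ncard := (Set.ncard_pos (Set.toFinite R)).mpr ⟨a, haR⟩
    omega
  · -- swap a and c to get a basis avoiding a
    have himg : IsResolving G (Equiv.swap a c '' R) := by
      intro x y hxy
      obtain ⟨r, hrR, hrne⟩ := hRres (Equiv.swap a c x) (Equiv.swap a c y)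
        (fun h => hxy ((Equiv.swap a c).injective h))
      refine ⟨Equiv.swap a c r, Set.mem_image_of_mem _ hrR, ?_⟩
      have h1 := dist_map r (Equiv.swap a c x)
      have h2 := dist_map r (Equiv.swap a c y)
      rw [Equiv.swap_apply_self] at h1 h2
      rw [h1, h2]
      exact hrne
    have himgcard : (Equiv.swap a c '' R).ncard = R.ncard :=
      Set.ncard_image_of_injective R (Equiv.swap a c).injective
    have hbasis' : IsMetricBasis G (Equiv.swap a c '' R) :=
      ⟨himg, by rw [himgcard]; exact hRcard⟩
    have haimg : a ∈ Equiv.swap a c '' R := hforced _ hbasis'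
    obtain ⟨r, hrR, hr⟩ := haimg
    have hrc : r = c := by
      have h := congrArg (Equiv.swap a c) hr
      rwa [Equiv.swap_apply_self, Equiv.swap_apply_left] at h
    exact hcR (hrc ▸ hrR)

theorem stmt14 {V : Type*} [Fintype V] (G : SimpleGraph V) (hG : G.Connected)
    (hcard : 5 ≤ Fintype.card V)
    (C : Gᶜ.ConnectedComponent)
    (hiso : Nonempty ((Gᶜ.induce C.supp) ≃g cycleGraph 4)) :
    ∀ v ∈ C.supp, ¬ IsBasisForced G v := by
  classical
  intro v hv
  obtain ⟨e⟩ := hiso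
  set i : Fin 4 := e ⟨v, hv⟩ with hi
  set f : Fin 4 → V := fun j => ((e.symm j : C.supp) : V) with hf
  have hmem : ∀ j, f j ∈ C.supp := fun j => (e.symm j).2
  have hfv : f i = v := by
    simp only [hf, hi, RelIso.symm_apply_apply]
  have hinj : Function.Injective f := by
    intro j k h
    have := Subtype.ext h
    exact e.symm.injective this
  have hadj : ∀ j k : Fin 4, Gᶜ.Adj (f j) (f k) ↔ (cycleGraph 4).Adj j k := by
    intro j k
    rw [← e.symm.map_adj_iff (v := j) (w := k)]
    rfl
  have hall : ∀ i' j : Fin 4, j = i' ∨ j = i' + 1 ∨ j = i' + 2 ∨ j = i' + 3 := by decide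
  have hsupp : ∀ u ∈ C.supp, u = f i ∨ u = f (i + 1) ∨ u = f (i + 2) ∨ u = f (i + 3) := by
    intro u hu
    have h1 : f (e ⟨u, hu⟩) = u := by
      simp only [hf, RelIso.symm_apply_apply]
    rcases hall i (e ⟨u, hu⟩) with h | h | h | h <;>
      rw [← h1, h] <;> tauto
  have hout : ∀ u ∈ C.supp, ∀ x, x ∉ C.supp → G.Adj u x := by
    intro u hu x hx
    have hne : u ≠ x := fun h => hx (h ▸ hu)
    have hnadj : ¬ Gᶜ.Adj u x := by
      intro h
      apply hx
      rw [ConnectedComponent.mem_supp_iff] at hu ⊢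
      rw [← hu]
      exact (ConnectedComponent.sound h.symm.reachable)
    by_contra hn
    exact hnadj ((G.compl_adj u x).mpr ⟨hne, hn⟩)
  -- cycle graph facts
  have c1 : ∀ i' : Fin 4, (cycleGraph 4).Adj i' (i' + 1) := by decide
  have c2 : ∀ i' : Fin 4, ¬ (cycleGraph 4).Adj i' (i' + 2) := by decide
  have c3 : ∀ i' : Fin 4, (cycleGraph 4).Adj i' (i' + 3) := by decide
  have c4 : ∀ i' : Fin 4, (cycleGraph 4).Adj (i' + 2) (i' + 1) := by decide
  have c5 : ∀ i' : Fin 4, (cycleGraph 4).Adj (i' + 2) (i' + 3) := by decide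
  have c6 : ∀ i' : Fin 4, ¬ (cycleGraph 4).Adj (i' + 1) (i' + 3) := by decide
  have n1 : ∀ i' : Fin 4, i' ≠ i' + 1 := by decide
  have n2 : ∀ i' : Fin 4, i' ≠ i' + 2 := by decide
  have n3 : ∀ i' : Fin 4, i' ≠ i' + 3 := by decide
  have n4 : ∀ i' : Fin 4, i' + 1 ≠ i' + 2 := by decide
  have n5 : ∀ i' : Fin 4, i' + 1 ≠ i' + 3 := by decide
  have n6 : ∀ i' : Fin 4, i' + 2 ≠ i' + 3 := by decide
  have hne : ∀ j k : Fin 4, j ≠ k → f j ≠ f k := fun j k h hc => h (hinj hc)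
  -- G adjacency facts among the four
  have gadj : ∀ j k : Fin 4, j ≠ k → ¬ (cycleGraph 4).Adj j k → G.Adj (f j) (f k) := by
    intro j k hjk hnadj
    by_contra hn
    exact hnadj ((hadj j k).mp ((G.compl_adj _ _).mpr ⟨hne j k hjk, hn⟩))
  have gnadj : ∀ j k : Fin 4, (cycleGraph 4).Adj j k → ¬ G.Adj (f j) (f k) := by
    intro j k h
    exact ((G.compl_adj _ _).mp ((hadj j k).mpr h)).2
  -- an outside vertex exists
  have hcard4 : Fintype.card C.supp = 4 := by
    have := Fintype.card_congr e.toEquiv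
    simpa using this
  have hex : ∃ x, x ∉ C.supp := by
    by_contra h
    push_neg at h
    have hle : Fintype.card V ≤ Fintype.card C.supp :=
      Fintype.card_le_of_injective (fun x => ⟨x, h x⟩)
        (fun x y hxy => congrArg Subtype.val hxy)
    omega
  obtain ⟨x0, hx0⟩ := hex
  have hx0ne : ∀ j : Fin 4, x0 ≠ f j := fun j h => hx0 (h ▸ hmem j)
  have hkey := key G hG (f i) (f (i+1)) (f (i+2)) (f (i+3))
    (hne _ _ (n1 i)) (hne _ _ (n2 i)) (hne _ _ (n3 i))
    (hne _ _ (n4 i)) (hne _ _ (n5 i)) (hne _ _ (n6 i))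
    (gadj _ _ (n2 i) (c2 i)) (gadj _ _ (n5 i) (c6 i))
    (gnadj _ _ (c1 i)) (gnadj _ _ (c3 i)) (gnadj _ _ (c4 i)) (gnadj _ _ (c5 i))
    (by
      intro u h1 h2 h3 h4
      have hu : u ∉ C.supp := by
        intro hu
        rcases hsupp u hu with h | h | h | h <;> [exact h1 h; exact h2 h; exact h3 h; exact h4 h]
      exact ⟨hout _ (hmem i) u hu, hout _ (hmem (i+1)) u hu,
        hout _ (hmem (i+2)) u hu, hout _ (hmem (i+3)) u hu⟩)
    ⟨x0, hx0ne i, hx0ne (i+1), hx0ne (i+2), hx0ne (i+3)⟩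
  rwa [hfv] at hkey
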